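/- When WPT is deactivated, if all initial energies E_k are scaled up (each E_k increases) with T fixed, then the common dual value δ* increases and hence every optimal transmit power p_k increases. -/

import Mathlib

open Set

lemma gmono_aux (γ c : ℝ) (hγ : 0 < γ) (hc : 0 < c) :
    StrictMonoOn (fun p : ℝ => Real.log (1 + p * γ) - (p + c) * γ / (1 + p * γ))
      (Set.Ici 0) := by
  have hpos : ∀ x ∈ Set.Ici (0:ℝ), 0 < 1 + x * γ := by
    intro x hx
    have : 0 ≤ x * γ := mul_nonneg hx hγ.le
    linarith
  apply strictMonoOn_of_deriv_pos (convex_Ici 0)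
  · apply ContinuousOn.sub
    · exact (Real.continuousOn_log.comp
        (by fun_prop) (fun x hx => Set.mem_compl_singleton_iff.mpr (hpos x hx).ne'))
    · exact ContinuousOn.div (by fun_prop) (by fun_prop)
        (fun x hx => (hpos x hx).ne')
  · intro x hx
    rw [interior_Ici] at hx
    have hx0 : (0:ℝ) < x := hx
    have hxm : x ∈ Set.Ici (0:ℝ) := le_of_lt hx0
    have hd : 0 < 1 + x * γ := hpos x hxm
    have h1 : HasDerivAt (fun p : ℝ => 1 + p * γ) γ x := by
      simpa using ((hasDerivAt_id x).mul_const γ).const_add 1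
    have hlog : HasDerivAt (fun p : ℝ => Real.log (1 + p * γ)) (γ / (1 + x * γ)) x :=
      h1.log hd.ne'
    have hnum : HasDerivAt (fun p : ℝ => (p + c) * γ) γ x := by
      simpa using ((hasDerivAt_id x).add_const c).mul_const γ
    have hdiv : HasDerivAt (fun p : ℝ => (p + c) * γ / (1 + p * γ))
        ((γ * (1 + x * γ) - (x + c) * γ * γ) / (1 + x * γ) ^ 2) x :=
      hnum.div h1 hd.ne'
    have hfull : HasDerivAt (fun p : ℝ => Real.log (1 + p * γ) - (p + c) * γ / (1 + p * γ))
        (γ / (1 + x * γ) - (γ * (1 + x * γ) - (x + c) * γ * γ) / (1 + x * γ) ^ 2) x :=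
      hlog.sub hdiv
    have heq : γ / (1 + x * γ) - (γ * (1 + x * γ) - (x + c) * γ * γ) / (1 + x * γ) ^ 2
        = (x + c) * γ ^ 2 / (1 + x * γ) ^ 2 := by
      field_simp
      ring
    rw [hfull.deriv, heq]
    positivity

theorem power_increasing_in_energy (K : ℕ) (w γ c : Fin K → ℝ)
    (hw : ∀ k, 0 < w k) (hγ : ∀ k, 0 < γ k) (hc : ∀ k, 0 < c k)
    (G : Fin K → ℝ → ℝ)
    (hG : ∀ k p, G k p = w k * Real.logb 2 (1 + p * γ k)
        - w k * (p + c k) * γ k / ((1 + p * γ k) * Real.log 2))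
    (T δ δ' : ℝ) (hT : 0 < T) (E E' : Fin K → ℝ) (p p' : Fin K → ℝ)
    (hE : ∀ k, 0 < E k) (hEE' : ∀ k, E k < E' k)
    (hp : ∀ k, 0 ≤ p k) (hp' : ∀ k, 0 ≤ p' k)
    (hroot : ∀ k, G k (p k) = δ) (hroot' : ∀ k, G k (p' k) = δ')
    (htime : ∑ k, E k / (p k + c k) = T) (htime' : ∑ k, E' k / (p' k + c k) = T) :
    δ < δ' ∧ ∀ k, p k < p' k := by
  have hlog2 : (0:ℝ) < Real.log 2 := Real.log_pos (by norm_num)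
  -- G k is strictly monotone on Ici 0
  have hmono : ∀ k, StrictMonoOn (G k) (Set.Ici 0) := by
    intro k
    have base := gmono_aux (γ k) (c k) (hγ k) (hc k)
    have hGk : ∀ x ∈ Set.Ici (0:ℝ), G k x = (w k / Real.log 2) *
        (Real.log (1 + x * γ k) - (x + c k) * γ k / (1 + x * γ k)) := by
      intro x hx
      have hd : 0 < 1 + x * γ k := by
        have : 0 ≤ x * γ k := mul_nonneg hx (hγ k).le
        linarith
      rw [hG k x]
      simp only [Real.logb]
      field_simp
    have hcpos : 0 < w k / Real.log 2 := div_pos (hw k) hlog2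
    intro a ha b hb hab
    rw [hGk a ha, hGk b hb]
    exact (mul_lt_mul_iff_right₀ hcpos).mpr (base ha hb hab)
  have hKpos : 0 < K := by
    rcases Nat.eq_zero_or_pos K with h | h
    · subst h; simp at htime; linarith
    · exact h
  have hδ : δ < δ' := by
    by_contra hcon
    push_neg at hcon
    -- δ' ≤ δ ⇒ p' k ≤ p k for all k
    have hple : ∀ k, p' k ≤ p k := by
      intro k
      by_contra hlt
      push_neg at hlt
      have := hmono k (hp k) (hp' k) hlt
      rw [hroot k, hroot' k] at this
      linarith
    have hsum : ∀ k, E k / (p k + c k) < E' k / (p' k + c k) := by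
      intro k
      have h1 : 0 < p' k + c k := by have := hc k; have := hp' k; linarith
      have h2 : 0 < p k + c k := by have := hc k; have := hp k; linarith
      calc E k / (p k + c k) ≤ E k / (p' k + c k) :=
            div_le_div_of_nonneg_left (hE k).le h1 (by linarith [hple k])
        _ < E' k / (p' k + c k) := by
            exact (div_lt_div_iff_of_pos_right h1).mpr (hEE' k)
    have : T < T := by
      calc T = ∑ k, E k / (p k + c k) := htime.symm
        _ < ∑ k, E' k / (p' k + c k) := by
            apply Finset.sum_lt_sum_of_nonempty
            · exact Finset.univ_nonempty_iff.mpr (Fin.pos_iff_nonempty.mp hKpos)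
            · intro k _; exact hsum k
        _ = T := htime'
    exact lt_irrefl T this
  refine ⟨hδ, fun k => ?_⟩
  by_contra hlt
  push_neg at hlt
  rcases eq_or_lt_of_le hlt with heq | hlt'
  · rw [← hroot k, ← hroot' k, heq] at hδ; exact lt_irrefl _ hδ
  · have := hmono k (hp' k) (hp k) hlt'
    rw [hroot k, hroot' k] at this
    linarith
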